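/- Let h, h̃ > 0. The map G : ℝ⁶ → ℝ⁴, G(u,v,w,ũ,ṽ,w̃) = (u, ũ, vṽ − ww̃, vw̃ + ṽw), maps the product of spheres S = {(u,v,w,ũ,ṽ,w̃) : u² + v² + w² = h², ũ² + ṽ² + w̃² = h̃²} onto the full singular reduced space P_{h,h̃} = { (π, ρ, σ, τ) ∈ ℝ⁴ : σ² + τ² = (h² − π²)(h̃² − ρ²), |π| ≤ h, |ρ| ≤ h̃ }. That is, for every (π, ρ, σ, τ) with σ² + τ² = (h² − π²)(h̃² − ρ²), |π| ≤ h and |ρ| ≤ h̃, there exists a point of S with these invariants. -/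

import Mathlib

/-!
STATEMENT 7: The invariant map `G(u,v,w,ũ,ṽ,w̃) = (u, ũ, vṽ − ww̃, vw̃ + ṽw)`
maps the product of spheres `S²_h × S²_h̃` onto the full singular reduced space
`P_{h,h̃} = {(π,ρ,σ,τ) : σ² + τ² = (h² − π²)(h̃² − ρ²), |π| ≤ h, |ρ| ≤ h̃}`.
-/

theorem invariant_map_onto_reduced_space
    (h ht : ℝ) (hh : 0 < h) (hht : 0 < ht)
    (pi1 rho sigma tau : ℝ)
    (hrel : sigma^2 + tau^2 = (h^2 - pi1^2) * (ht^2 - rho^2))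
    (hpi : |pi1| ≤ h) (hrho : |rho| ≤ ht) :
    ∃ u v w ut vt wt : ℝ,
      u^2 + v^2 + w^2 = h^2 ∧ ut^2 + vt^2 + wt^2 = ht^2 ∧
      u = pi1 ∧ ut = rho ∧ v*vt - w*wt = sigma ∧ v*wt + vt*w = tau := by
  have hpi2 : pi1 ^ 2 ≤ h ^ 2 := by
    have := sq_abs pi1
    nlinarith [abs_nonneg pi1]
  have hrho2 : rho ^ 2 ≤ ht ^ 2 := by
    have := sq_abs rho
    nlinarith [abs_nonneg rho]
  rcases eq_or_lt_of_le hpi2 with heq | hlt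
  · -- h² = π², so σ = τ = 0
    have hs : sigma = 0 ∧ tau = 0 := by
      constructor <;> nlinarith [sq_nonneg sigma, sq_nonneg tau]
    obtain ⟨hs0, ht0⟩ := hs
    refine ⟨pi1, 0, 0, rho, Real.sqrt (ht^2 - rho^2), 0, ?_, ?_, rfl, rfl, by simp [hs0], by simp [ht0]⟩
    · linarith [heq]
    · have : Real.sqrt (ht^2 - rho^2) ^ 2 = ht^2 - rho^2 :=
        Real.sq_sqrt (by linarith)
      rw [this]; ring
  · -- h² > π²
    set s := Real.sqrt (h^2 - pi1^2) with hsdef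
    have hspos : 0 < s := Real.sqrt_pos.mpr (by linarith)
    have hs2 : s ^ 2 = h^2 - pi1^2 := Real.sq_sqrt (by linarith)
    refine ⟨pi1, s, 0, rho, sigma / s, tau / s, ?_, ?_, rfl, rfl, ?_, ?_⟩
    · rw [hs2]; ring
    · field_simp
      nlinarith [hs2]
    · field_simp; ring
    · field_simp; ring
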